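/- Let $T$ be a measure-preserving transformation of a probability space $(X,\mu)$, $\phi: \mathbb{R}^2 \to \mathbb{R}$ bounded and uniformly continuous, $\{W_n\}$ measurable sets with $\mu(W_n \triangle T^{-1}W_n) \to 0$, $\xi \in L^\infty(X,\mu)$, and measurable functions $F_n, G_n: X \to \mathbb{R}$ such that $\chi_{W_n}\cdot(F_n \circ T - F_n) \to 0$ and $\chi_{W_n}\cdot(G_n \circ T - G_n) \to 0$ in measure. Then $\int_{W_n} \phi(F_n(x), G_n(x)) (\xi(x) - \xi(Tx))\, d\mu(x) \to 0$ as $n \to \infty$. -/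

import Mathlib

open MeasureTheory Filter

private lemma integrable_of_bdd {X : Type*} [MeasurableSpace X] {μ : Measure X}
    [IsFiniteMeasure μ] {h : X → ℝ} (hm : Measurable h) {C : ℝ} (hb : ∀ x, |h x| ≤ C) :
    Integrable h μ :=
  (integrable_const C).mono' hm.aestronglyMeasurable
    (Filter.Eventually.of_forall (by simpa [Real.norm_eq_abs] using hb))

/-- Coboundary cancellation: if `μ(W n ∆ T⁻¹ W n) → 0` and
`χ_{W n}·(F n ∘ T - F n) → 0`, `χ_{W n}·(G n ∘ T - G n) → 0` in measure, then for bounded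
uniformly continuous `φ` and bounded `ξ`,
`∫_{W n} φ(F n, G n)(ξ - ξ ∘ T) dμ → 0`. -/
theorem stmt18 {X : Type*} [MeasurableSpace X] (μ : Measure X) [IsProbabilityMeasure μ]
    (T : X → X) (hT : MeasurePreserving T μ μ)
    (φ : ℝ × ℝ → ℝ) (hφu : UniformContinuous φ) (Cφ : ℝ) (hφb : ∀ p, |φ p| ≤ Cφ)
    (W : ℕ → Set X) (hWmeas : ∀ n, MeasurableSet (W n))
    (hWsym : Tendsto (fun n => μ (symmDiff (W n) (T ⁻¹' W n))) atTop (nhds 0))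
    (ξ : X → ℝ) (hξm : Measurable ξ) (Cξ : ℝ) (hξb : ∀ x, |ξ x| ≤ Cξ)
    (F G : ℕ → X → ℝ) (hF : ∀ n, Measurable (F n)) (hG : ∀ n, Measurable (G n))
    (hFrig : TendstoInMeasure μ
      (fun n => (W n).indicator (fun x => F n (T x) - F n x)) atTop (0 : X → ℝ))
    (hGrig : TendstoInMeasure μ
      (fun n => (W n).indicator (fun x => G n (T x) - G n x)) atTop (0 : X → ℝ)) :
    Tendsto (fun n => ∫ x in W n, φ (F n x, G n x) * (ξ x - ξ (T x)) ∂μ)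
      atTop (nhds 0) := by
  have hCφ0 : 0 ≤ Cφ := le_trans (abs_nonneg _) (hφb 0)
  have hne : Nonempty X := by
    by_contra h
    rw [not_nonempty_iff] at h
    have h1 : μ Set.univ = 1 := measure_univ
    rw [Set.univ_eq_empty_iff.mpr h, measure_empty] at h1
    exact zero_ne_one h1
  have hCξ0 : 0 ≤ Cξ := le_trans (abs_nonneg _) (hξb (Classical.arbitrary X))
  rw [NormedAddCommGroup.tendsto_nhds_zero]
  intro ε hε
  set εφ : ℝ := ε / (2 * (Cξ + 1)) with hεφdef
  have hεφ : 0 < εφ := by positivity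
  obtain ⟨δ, hδ, hδφ⟩ := Metric.uniformContinuous_iff.mp hφu εφ hεφ
  set t : ℝ := εφ / (2 * Cφ * Cξ + 1) with htdef
  have ht : 0 < t := by positivity
  -- bad sets
  set BF : ℕ → Set X :=
    fun n => {x | δ ≤ dist ((W n).indicator (fun x => F n (T x) - F n x) x) ((0 : X → ℝ) x)}
    with hBFdef
  set BG : ℕ → Set X :=
    fun n => {x | δ ≤ dist ((W n).indicator (fun x => G n (T x) - G n x) x) ((0 : X → ℝ) x)}
    with hBGdef
  have hBFt : Tendsto (fun n => μ (BF n)) atTop (nhds 0) := tendstoInMeasure_iff_dist.mp hFrig δ hδ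
  have hBGt : Tendsto (fun n => μ (BG n)) atTop (nhds 0) := tendstoInMeasure_iff_dist.mp hGrig δ hδ
  set S : ℕ → Set X := fun n => (symmDiff (W n) (T ⁻¹' W n) ∪ BF n) ∪ BG n with hSdef
  have hSle : ∀ n, μ (S n) ≤ μ (symmDiff (W n) (T ⁻¹' W n)) + μ (BF n) + μ (BG n) := by
    intro n
    exact le_trans (measure_union_le _ _) (add_le_add_left (measure_union_le _ _) _)
  have hsum : Tendsto (fun n => μ (symmDiff (W n) (T ⁻¹' W n)) + μ (BF n) + μ (BG n))
      atTop (nhds 0) := by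
    have := (hWsym.add hBFt).add hBGt
    simpa using this
  have hev : ∀ᶠ n in atTop, μ (S n) < ENNReal.ofReal t := by
    have h0t : (0 : ENNReal) < ENNReal.ofReal t := ENNReal.ofReal_pos.mpr ht
    filter_upwards [hsum.eventually (gt_mem_nhds h0t)] with n hn
    exact lt_of_le_of_lt (hSle n) hn
  filter_upwards [hev] with n hn
  -- notation for this n
  set A := W n with hA
  have hAm : MeasurableSet A := hWmeas n
  set f := F n with hf
  set g := G n with hg
  have hfm : Measurable f := hF n
  have hgm : Measurable g := hG n
  set p : X → ℝ := fun x => φ (f x, g x) with hp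
  have hpm : Measurable p := hφu.continuous.measurable.comp (hfm.prodMk hgm)
  have hpb : ∀ x, |p x| ≤ Cφ := fun x => hφb _
  set g1 : X → ℝ := A.indicator (fun x => p x * ξ x) with hg1
  set g2 : X → ℝ := A.indicator (fun x => p x * ξ (T x)) with hg2
  have habs : ∀ (u v : X), |p u * ξ v| ≤ Cφ * Cξ := fun u v => by
    rw [abs_mul]
    exact mul_le_mul (hpb u) (hξb v) (abs_nonneg _) hCφ0
  have hg1b : ∀ x, |g1 x| ≤ Cφ * Cξ := by
    intro x
    rw [hg1]
    by_cases hx : x ∈ A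
    · rw [Set.indicator_of_mem hx]; exact habs x x
    · rw [Set.indicator_of_notMem hx]; simp [mul_nonneg hCφ0 hCξ0]
  have hg2b : ∀ x, |g2 x| ≤ Cφ * Cξ := by
    intro x
    rw [hg2]
    by_cases hx : x ∈ A
    · rw [Set.indicator_of_mem hx]; exact habs x (T x)
    · rw [Set.indicator_of_notMem hx]; simp [mul_nonneg hCφ0 hCξ0]
  have hg1m : Measurable g1 := (hpm.mul hξm).indicator hAm
  have hg2m : Measurable g2 := (hpm.mul (hξm.comp hT.measurable)).indicator hAm
  have hg1i : Integrable g1 μ := integrable_of_bdd hg1m hg1b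
  have hg2i : Integrable g2 μ := integrable_of_bdd hg2m hg2b
  have hg1Ti : Integrable (fun x => g1 (T x)) μ :=
    integrable_of_bdd (hg1m.comp hT.measurable) (fun x => hg1b (T x))
  -- rewrite the integral
  have step1 : ∫ x in A, p x * (ξ x - ξ (T x)) ∂μ = ∫ x, (g1 x - g2 x) ∂μ := by
    rw [← integral_indicator hAm]
    congr 1
    funext x
    rw [hg1, hg2]
    by_cases hx : x ∈ A
    · simp [Set.indicator_of_mem hx, mul_sub]
    · simp [Set.indicator_of_notMem hx]
  have step2 : ∫ x, g1 x ∂μ = ∫ x, g1 (T x) ∂μ := by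
    calc ∫ x, g1 x ∂μ = ∫ x, g1 x ∂(Measure.map T μ) := by rw [hT.map_eq]
    _ = ∫ x, g1 (T x) ∂μ := integral_map hT.measurable.aemeasurable
        (by rw [hT.map_eq]; exact hg1i.aestronglyMeasurable)
  have step3 : ∫ x in A, p x * (ξ x - ξ (T x)) ∂μ = ∫ x, (g1 (T x) - g2 x) ∂μ := by
    rw [step1, integral_sub hg1i hg2i, step2, ← integral_sub hg1Ti hg2i]
  -- the dominating function
  set bound : X → ℝ := fun x => (2 * Cφ * (S n).indicator (fun _ => (1 : ℝ)) x + εφ) * Cξ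
    with hbound
  have hSm : MeasurableSet (S n) := by
    have hBFm : MeasurableSet (BF n) := by
      have : Measurable fun x =>
          dist ((W n).indicator (fun x => F n (T x) - F n x) x) ((0 : X → ℝ) x) := by
        exact (((hF n).comp hT.measurable).sub (hF n)).indicator (hWmeas n) |>.dist measurable_const
      exact measurableSet_le measurable_const this
    have hBGm : MeasurableSet (BG n) := by
      have : Measurable fun x =>
          dist ((W n).indicator (fun x => G n (T x) - G n x) x) ((0 : X → ℝ) x) := by
        exact (((hG n).comp hT.measurable).sub (hG n)).indicator (hWmeas n) |>.dist measurable_const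
      exact measurableSet_le measurable_const this
    exact (((hWmeas n).symmDiff ((hWmeas n).preimage hT.measurable)).union hBFm).union hBGm
  have hboundi : Integrable bound μ :=
    ((((integrable_const (1 : ℝ)).indicator hSm).const_mul (2 * Cφ)).add
      (integrable_const εφ)).mul_const Cξ
  -- pointwise bound
  have hpt : ∀ x, ‖g1 (T x) - g2 x‖ ≤ bound x := by
    intro x
    rw [Real.norm_eq_abs]
    simp only [hbound]
    by_cases hxS : x ∈ S n
    · rw [Set.indicator_of_mem hxS]
      have h1 := hg1b (T x)
      have h2 := hg2b x
      have hεξ : 0 ≤ εφ * Cξ := mul_nonneg hεφ.le hCξ0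
      calc |g1 (T x) - g2 x| ≤ |g1 (T x)| + |g2 x| := abs_sub _ _
      _ ≤ Cφ * Cξ + Cφ * Cξ := add_le_add h1 h2
      _ ≤ (2 * Cφ * 1 + εφ) * Cξ := by nlinarith
    · rw [Set.indicator_of_notMem hxS]
      have hxΔ : x ∉ symmDiff (W n) (T ⁻¹' W n) := fun h => hxS (Or.inl (Or.inl h))
      have hxBF : x ∉ BF n := fun h => hxS (Or.inl (Or.inr h))
      have hxBG : x ∉ BG n := fun h => hxS (Or.inr h)
      have hiff : x ∈ A ↔ T x ∈ A := by
        rw [Set.mem_symmDiff] at hxΔ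
        push_neg at hxΔ
        constructor
        · intro h; exact hxΔ.1 h
        · intro h; exact hxΔ.2 h
      by_cases hxA : x ∈ A
      · have hTxA : T x ∈ A := hiff.mp hxA
        rw [hg1, hg2, Set.indicator_of_mem hTxA, Set.indicator_of_mem hxA]
        have hdF : |f (T x) - f x| < δ := by
          rw [hBFdef, Set.mem_setOf_eq, not_le] at hxBF
          rwa [Set.indicator_of_mem hxA, Pi.zero_apply, Real.dist_eq, sub_zero] at hxBF
        have hdG : |g (T x) - g x| < δ := by
          rw [hBGdef, Set.mem_setOf_eq, not_le] at hxBG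
          rwa [Set.indicator_of_mem hxA, Pi.zero_apply, Real.dist_eq, sub_zero] at hxBG
        have hdist : dist ((f (T x), g (T x)) : ℝ × ℝ) (f x, g x) < δ := by
          rw [Prod.dist_eq]
          exact max_lt (by rwa [Real.dist_eq]) (by rwa [Real.dist_eq])
        have hφd : |p (T x) - p x| < εφ := by
          have := hδφ hdist
          rwa [Real.dist_eq] at this
        have : p (T x) * ξ (T x) - p x * ξ (T x) = (p (T x) - p x) * ξ (T x) := by ring
        rw [this, abs_mul]
        calc |p (T x) - p x| * |ξ (T x)| ≤ εφ * Cξ :=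
          mul_le_mul hφd.le (hξb _) (abs_nonneg _) hεφ.le
        _ ≤ (2 * Cφ * 0 + εφ) * Cξ := by rw [mul_zero, zero_add]
      · have hTxA : T x ∉ A := fun h => hxA (hiff.mpr h)
        rw [hg1, hg2, Set.indicator_of_notMem hTxA, Set.indicator_of_notMem hxA]
        simp only [sub_zero, abs_zero]
        positivity
  -- integrate the bound
  have hm0 : 0 ≤ (μ (S n)).toReal := ENNReal.toReal_nonneg
  have hmt : (μ (S n)).toReal < t := ENNReal.toReal_lt_of_lt_ofReal hn
  have hnorm : ‖∫ x in A, p x * (ξ x - ξ (T x)) ∂μ‖ ≤ (2 * Cφ * (μ (S n)).toReal + εφ) * Cξ := by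
    rw [step3]
    calc ‖∫ x, (g1 (T x) - g2 x) ∂μ‖ ≤ ∫ x, ‖g1 (T x) - g2 x‖ ∂μ :=
      norm_integral_le_integral_norm _
    _ ≤ ∫ x, bound x ∂μ := integral_mono_of_nonneg
        (Filter.Eventually.of_forall fun x => norm_nonneg _) hboundi
        (Filter.Eventually.of_forall hpt)
    _ = (2 * Cφ * (μ (S n)).toReal + εφ) * Cξ := by
        rw [hbound]
        rw [integral_mul_const]
        congr 1
        rw [integral_add (((integrable_const (1 : ℝ)).indicator hSm).const_mul (2 * Cφ))
          (integrable_const εφ)]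
        rw [integral_const_mul, integral_indicator_const _ hSm, integral_const]
        simp [measure_univ, Measure.real]
  have hεφeq : εφ * (2 * (Cξ + 1)) = ε := by
    rw [hεφdef]; field_simp
  have hteq : t * (2 * Cφ * Cξ + 1) = εφ := by
    rw [htdef]; field_simp
  calc ‖∫ x in W n, φ (F n x, G n x) * (ξ x - ξ (T x)) ∂μ‖
      = ‖∫ x in A, p x * (ξ x - ξ (T x)) ∂μ‖ := rfl
  _ ≤ (2 * Cφ * (μ (S n)).toReal + εφ) * Cξ := hnorm
  _ < ε := by
      have h1 : 2 * Cφ * (μ (S n)).toReal ≤ 2 * Cφ * t :=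
        mul_le_mul_of_nonneg_left hmt.le (by linarith)
      have h1c : 2 * Cφ * (μ (S n)).toReal * Cξ ≤ 2 * Cφ * t * Cξ :=
        mul_le_mul_of_nonneg_right h1 hCξ0
      have h2 : 2 * Cφ * t * Cξ ≤ εφ := by nlinarith [ht.le, hteq]
      nlinarith [h1c, h2, hεφeq, hε, mul_nonneg hεφ.le hCξ0]
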